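/- arXiv:1108.3653 — 5 statements merged into one kernel-verified Lean document; each statement's English description precedes it below -/
import Mathlib

section
/- If C is a set of clusters on X and (x_1, ..., x_k) is a sequence of distinct taxa with k >= 2 such that x_i ->_C x_{i+1} for all 1 <= i <= k-1 and x_k ->_C x_1, then the set {x_1, ..., x_k} is compatible with C (every cluster in C either contains all of these taxa or is disjoint from their union, when restricted to non-singleton clusters containing any of them). -/
/-- `x →_C y`: every cluster in `C` of size at least 2 that contains `x` also
contains `y`. -/
def Arrow {X : Type*} (C : Set (Set X)) (x y : X) : Prop :=
  ∀ c ∈ C, c.Nontrivial → x ∈ c → y ∈ c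

/-- Two sets are compatible: one contains the other, or they are disjoint. -/
def Compat {X : Type*} (A B : Set X) : Prop :=
  A ∩ B = ∅ ∨ A ⊆ B ∨ B ⊆ A

/-- If `(x 0, …, x (k-1))` is a sequence of distinct taxa, `k ≥ 2`, with
`x i →_C x (i+1)` for all `i ≤ k - 2` and `x (k-1) →_C x 0`, then the set
`{x 0, …, x (k-1)}` is compatible with `C` (every cluster of `C` is compatible
with it). -/
theorem stmt4 {X : Type*} (C : Set (Set X))
    (hcl : ∀ c ∈ C, c.Nonempty ∧ c ≠ Set.univ)
    (k : ℕ) (hk : 2 ≤ k) (x : ℕ → X)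
    (hinj : ∀ i j, i < k → j < k → x i = x j → i = j)
    (hchain : ∀ i, i + 1 < k → Arrow C (x i) (x (i + 1)))
    (hcycle : Arrow C (x (k - 1)) (x 0)) :
    ∀ c ∈ C, Compat c {a : X | ∃ i < k, a = x i} := by
  intro c hc
  by_cases hnt : c.Nontrivial
  · by_cases hint : ∃ i, i < k ∧ x i ∈ c
    · obtain ⟨i, hik, hxi⟩ := hint
      have fwd : ∀ m, x m ∈ c → ∀ j, m ≤ j → j < k → x j ∈ c := by
        intro m hm j
        induction j with
        | zero => intro hmj _; exact (Nat.le_zero.mp hmj) ▸ hm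
        | succ n ih =>
          intro hmj hjk
          rcases Nat.eq_or_lt_of_le hmj with h | h
          · exact h ▸ hm
          · exact hchain n hjk c hc hnt (ih (by omega) (by omega))
      have hlast : x (k - 1) ∈ c := fwd i hxi (k - 1) (by omega) (by omega)
      have h0 : x 0 ∈ c := hcycle c hc hnt hlast
      right; right
      rintro a ⟨j, hj, rfl⟩
      exact fwd 0 h0 j (Nat.zero_le j) hj
    · left
      push_neg at hint
      ext a
      simp only [Set.mem_inter_iff, Set.mem_setOf_eq, Set.mem_empty_iff_false, iff_false]
      rintro ⟨hac, j, hj, rfl⟩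
      exact hint j hj hac
  · obtain ⟨⟨a, ha⟩, -⟩ := hcl c hc
    have hsing : ∀ b ∈ c, b = a := by
      intro b hb
      by_contra hba
      exact hnt ⟨b, hb, a, ha, hba⟩
    by_cases haS : ∃ i, i < k ∧ a = x i
    · right; left
      intro b hb
      obtain ⟨i, hi, hai⟩ := haS
      exact ⟨i, hi, (hsing b hb) ▸ hai⟩
    · left
      ext b
      simp only [Set.mem_inter_iff, Set.mem_setOf_eq, Set.mem_empty_iff_false, iff_false]
      rintro ⟨hbc, j, hj, rfl⟩
      exact haS ⟨j, hj, (hsing _ hbc).symm⟩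
end

section
/- The union of two ST-sets S1 and S2 with S1 ∩ S2 ≠ ∅ is again an ST-set. -/
set_option maxHeartbeats 1000000

def STSet {X : Type*} (C : Set (Set X)) (S : Set X) : Prop :=
  (∀ c ∈ C, Compat c S) ∧ ∀ c₁ ∈ C, ∀ c₂ ∈ C, Compat (c₁ ∩ S) (c₂ ∩ S)

lemma Compat.inst {X : Type*} {A B : Set X} (h : Compat A B) (w x y z : X) :
    (¬(w ∈ A ∧ w ∈ B) ∧ ¬(x ∈ A ∧ x ∈ B) ∧ ¬(y ∈ A ∧ y ∈ B) ∧ ¬(z ∈ A ∧ z ∈ B)) ∨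
    ((¬(w ∈ A) ∨ w ∈ B) ∧ (¬(x ∈ A) ∨ x ∈ B) ∧ (¬(y ∈ A) ∨ y ∈ B) ∧ (¬(z ∈ A) ∨ z ∈ B)) ∨
    ((¬(w ∈ B) ∨ w ∈ A) ∧ (¬(x ∈ B) ∨ x ∈ A) ∧ (¬(y ∈ B) ∨ y ∈ A) ∧ (¬(z ∈ B) ∨ z ∈ A)) := by
  rcases h with h | h | h
  · left
    rw [Set.eq_empty_iff_forall_notMem] at h
    exact ⟨fun hp => h w ⟨hp.1, hp.2⟩, fun hp => h x ⟨hp.1, hp.2⟩,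
      fun hp => h y ⟨hp.1, hp.2⟩, fun hp => h z ⟨hp.1, hp.2⟩⟩
  · exact Or.inr (Or.inl ⟨imp_iff_not_or.mp (@h w), imp_iff_not_or.mp (@h x),
      imp_iff_not_or.mp (@h y), imp_iff_not_or.mp (@h z)⟩)
  · exact Or.inr (Or.inr ⟨imp_iff_not_or.mp (@h w), imp_iff_not_or.mp (@h x),
      imp_iff_not_or.mp (@h y), imp_iff_not_or.mp (@h z)⟩)

lemma compat_of_forall {X : Type*} {A B : Set X}
    (h : ∀ x y z : X, x ∈ A → x ∈ B → y ∈ A → z ∈ B → (y ∈ B ∨ z ∈ A)) :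
    Compat A B := by
  by_cases hd : A ∩ B = ∅
  · exact Or.inl hd
  · rw [← Set.not_nonempty_iff_eq_empty, not_not] at hd
    obtain ⟨p, hpA, hpB⟩ := hd
    by_cases hs : A ⊆ B
    · exact Or.inr (Or.inl hs)
    · right; right
      rw [Set.not_subset] at hs
      obtain ⟨q, hqA, hqB⟩ := hs
      intro r hrB
      rcases h p q r hpA hpB hqA hrB with h' | h'
      · exact absurd h' hqB
      · exact h'

/-- Boolean form of a `Compat` hypothesis instantiated at four points. -/
abbrev cpt (a1 b1 a2 b2 a3 b3 a4 b4 : Bool) : Bool :=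
  ((!(a1 && b1)) && ((!(a2 && b2)) && ((!(a3 && b3)) && (!(a4 && b4))))) ||
  (((((!a1) || b1) && ((((!a2) || b2)) && ((((!a3) || b3)) && (((!a4) || b4)))))) ||
   ((((!b1) || a1) && ((((!b2) || a2)) && ((((!b3) || a3)) && (((!b4) || a4)))))))

lemma boolkey : ∀ wc1 wc2 ws1 ws2 xc1 xc2 xs1 xs2 yc1 yc2 ys1 ys2 zc1 zc2 zs1 zs2 : Bool,
    (ws1 && (ws2 && (cpt wc1 ws1 xc1 xs1 yc1 ys1 zc1 zs1 && (cpt wc1 ws2 xc1 xs2 yc1 ys2 zc1 zs2 && (cpt wc2 ws1 xc2 xs1 yc2 ys1 zc2 zs1 && (cpt wc2 ws2 xc2 xs2 yc2 ys2 zc2 zs2 && (cpt (wc1 && ws1) (wc2 && ws1) (xc1 && xs1) (xc2 && xs1) (yc1 && ys1) (yc2 && ys1) (zc1 && zs1) (zc2 && zs1) && (cpt (wc1 && ws2) (wc2 && ws2) (xc1 && xs2) (xc2 && xs2) (yc1 && ys2) (yc2 && ys2) (zc1 && zs2) (zc2 && zs2) && (xc1 && ((xs1 || xs2) && (xc2 &&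 (yc1 && ((ys1 || ys2) && (zc2 && (zs1 || zs2))))))))))))))) = true
    → ((yc2 && (ys1 || ys2)) || (zc1 && (zs1 || zs2))) = true := by
  decide

/-- The union of two intersecting ST-sets is again an ST-set. -/
theorem stmt11 {X : Type*} (C : Set (Set X)) (S₁ S₂ : Set X)
    (h₁ : STSet C S₁) (h₂ : STSet C S₂) (hmeet : (S₁ ∩ S₂).Nonempty) :
    STSet C (S₁ ∪ S₂) := by
  classical
  obtain ⟨w, hw1, hw2⟩ := hmeet
  constructor
  · intro c hc
    rcases h₁.1 c hc with e1 | s1 | s1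
    · rcases h₂.1 c hc with e2 | s2 | s2
      · left; rw [Set.inter_union_distrib_left, e1, e2, Set.empty_union]
      · right; left; exact fun a ha => Or.inr (s2 ha)
      · exfalso
        have hm : w ∈ c ∩ S₁ := ⟨s2 hw2, hw1⟩
        rw [e1] at hm; exact hm
    · right; left; exact fun a ha => Or.inl (s1 ha)
    · rcases h₂.1 c hc with e2 | s2 | s2
      · exfalso
        have hm : w ∈ c ∩ S₂ := ⟨s1 hw1, hw2⟩
        rw [e2] at hm; exact hm
      · right; left; exact fun a ha => Or.inr (s2 ha)
      · right; right; exact Set.union_subset s1 s2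
  · intro c₁ hc₁ c₂ hc₂
    apply compat_of_forall
    intro x y z hx hx' hy hz
    have a1 := (h₁.1 c₁ hc₁).inst w x y z
    have a2 := (h₂.1 c₁ hc₁).inst w x y z
    have a3 := (h₁.1 c₂ hc₂).inst w x y z
    have a4 := (h₂.1 c₂ hc₂).inst w x y z
    have p1 := (h₁.2 c₁ hc₁ c₂ hc₂).inst w x y z
    have p2 := (h₂.2 c₁ hc₁ c₂ hc₂).inst w x y z
    simp only [Set.mem_inter_iff, Set.mem_union] at hx hx' hy hz p1 p2 ⊢
    obtain ⟨hx1, hx2⟩ := hx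
    obtain ⟨hx'1, hx'2⟩ := hx'
    obtain ⟨hy1, hy2⟩ := hy
    obtain ⟨hz1, hz2⟩ := hz
    have key := boolkey (decide (w ∈ c₁)) (decide (w ∈ c₂)) (decide (w ∈ S₁)) (decide (w ∈ S₂))
      (decide (x ∈ c₁)) (decide (x ∈ c₂)) (decide (x ∈ S₁)) (decide (x ∈ S₂))
      (decide (y ∈ c₁)) (decide (y ∈ c₂)) (decide (y ∈ S₁)) (decide (y ∈ S₂))
      (decide (z ∈ c₁)) (decide (z ∈ c₂)) (decide (z ∈ S₁)) (decide (z ∈ S₂))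
    simp only [cpt, ← Bool.decide_and, ← Bool.decide_or, ← decide_not, decide_eq_true_eq] at key
    apply key
    and_intros <;> assumption
end

section
/- Let C be a set of clusters on X with incompatibility graph IG(C). Then there do not exist two distinct non-trivial connected components C̄ and C̄' of IG(C) (each containing at least two clusters) such that the union of the clusters in C̄ equals the union of the clusters in C̄'. -/
/-- The connected component of the cluster `c` in the incompatibility graph of
`C`: all clusters of `C` linked to `c` by a chain of pairwise incompatible
clusters of `C`. -/
def IGComponent {X : Type*} (C : Set (Set X)) (c : Set X) : Set (Set X) :=
  {d | d ∈ C ∧ Relation.ReflTransGen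
        (fun a b => a ∈ C ∧ b ∈ C ∧ ¬ Compat a b) c d}

section Aux

variable {X : Type*} {C : Set (Set X)}

private lemma compat_symm {A B : Set X} (h : Compat A B) : Compat B A := by
  rcases h with h | h | h
  · left; rwa [Set.inter_comm]
  · right; right; exact h
  · right; left; exact h

private lemma rel_symm :
    Symmetric (fun a b : Set X => a ∈ C ∧ b ∈ C ∧ ¬ Compat a b) := by
  rintro a b ⟨ha, hb, hn⟩
  exact ⟨hb, ha, fun hc => hn (compat_symm hc)⟩

private lemma comp_eq {c d : Set X}
    (h : Relation.ReflTransGen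
      (fun a b => a ∈ C ∧ b ∈ C ∧ ¬ Compat a b) c d) :
    IGComponent C c = IGComponent C d := by
  have hsym : Symmetric (Relation.ReflTransGen (fun a b : Set X => a ∈ C ∧ b ∈ C ∧ ¬ Compat a b)) := by
    haveI : Std.Symm (fun a b : Set X => a ∈ C ∧ b ∈ C ∧ ¬ Compat a b) := ⟨rel_symm (C := C)⟩
    exact fun _ _ h => Std.Symm.symm _ _ h
  ext e
  constructor
  · rintro ⟨he, hr⟩; exact ⟨he, Relation.ReflTransGen.trans (hsym h) hr⟩
  · rintro ⟨he, hr⟩; exact ⟨he, Relation.ReflTransGen.trans h hr⟩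

/-- Every member of a nontrivial component has an incompatible partner in the
component. -/
private lemma neighbor {c a : Set X} (hnt : (IGComponent C c).Nontrivial)
    (ha : a ∈ IGComponent C c) :
    ∃ a' ∈ IGComponent C c, ¬ Compat a a' := by
  have hsym : Symmetric (Relation.ReflTransGen (fun a b : Set X => a ∈ C ∧ b ∈ C ∧ ¬ Compat a b)) := by
    haveI : Std.Symm (fun a b : Set X => a ∈ C ∧ b ∈ C ∧ ¬ Compat a b) := ⟨rel_symm (C := C)⟩
    exact fun _ _ h => Std.Symm.symm _ _ h
  obtain ⟨d, hd, e, he, hde⟩ := hnt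
  have hex : ∃ f ∈ IGComponent C c, f ≠ a := by
    by_cases h : d = a
    · exact ⟨e, he, fun h' => hde (h.trans h'.symm)⟩
    · exact ⟨d, hd, h⟩
  obtain ⟨f, hf, hfa⟩ := hex
  have hraf : Relation.ReflTransGen
      (fun a b => a ∈ C ∧ b ∈ C ∧ ¬ Compat a b) a f :=
    Relation.ReflTransGen.trans (hsym ha.2) hf.2
  rcases hraf.cases_head with h | ⟨b, hr, _⟩
  · exact absurd h.symm hfa
  · exact ⟨b, ⟨hr.2.1, Relation.ReflTransGen.trans ha.2
      (Relation.ReflTransGen.single hr)⟩, hr.2.2⟩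

/-- If `a` is compatible with every cluster of a component and contains one
cluster of the component, it contains them all. -/
private lemma spread {c₂ a b₀ b : Set X}
    (hcomp : ∀ b' ∈ IGComponent C c₂, Compat a b')
    (hb₀ : b₀ ∈ IGComponent C c₂) (hb : b ∈ IGComponent C c₂)
    (hsub : b₀ ⊆ a) : b ⊆ a := by
  have hsym : Symmetric (Relation.ReflTransGen (fun a b : Set X => a ∈ C ∧ b ∈ C ∧ ¬ Compat a b)) := by
    haveI : Std.Symm (fun a b : Set X => a ∈ C ∧ b ∈ C ∧ ¬ Compat a b) := ⟨rel_symm (C := C)⟩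
    exact fun _ _ h => Std.Symm.symm _ _ h
  have hpath : Relation.ReflTransGen
      (fun a b => a ∈ C ∧ b ∈ C ∧ ¬ Compat a b) b₀ b :=
    Relation.ReflTransGen.trans (hsym hb₀.2) hb.2
  clear hb
  induction hpath with
  | refl => exact hsub
  | tail h1 hr ih =>
    rename_i x y
    have hyC : y ∈ C := hr.2.1
    have hy : y ∈ IGComponent C c₂ :=
      ⟨hyC, Relation.ReflTransGen.trans hb₀.2
        (Relation.ReflTransGen.trans h1 (Relation.ReflTransGen.single hr))⟩
    have hnc : ¬ Compat x y := hr.2.2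
    unfold Compat at hnc
    push_neg at hnc
    obtain ⟨hne, hnxy, _⟩ := hnc
    have hca : Compat a y := hcomp y hy
    rcases hca with h | h | h
    · -- a ∩ y = ∅, but x ∩ y ≠ ∅ and x ⊆ a
      exfalso
      obtain ⟨p, hpx, hpy⟩ := hne
      have hp : p ∈ a ∩ y := ⟨ih hpx, hpy⟩
      rw [h] at hp
      exact hp
    · -- a ⊆ y gives x ⊆ y, contradiction
      exact absurd (ih.trans h) hnxy
    · exact h

end Aux

/-- There do not exist two distinct non-trivial connected components of the
incompatibility graph `IG(C)` (each containing at least two clusters) whose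
unions of clusters coincide. -/
theorem stmt13 {X : Type*} (C : Set (Set X))
    (hcl : ∀ c ∈ C, c.Nonempty ∧ c ≠ Set.univ) :
    ¬ ∃ c₁ ∈ C, ∃ c₂ ∈ C,
        IGComponent C c₁ ≠ IGComponent C c₂ ∧
        (IGComponent C c₁).Nontrivial ∧ (IGComponent C c₂).Nontrivial ∧
        ⋃₀ IGComponent C c₁ = ⋃₀ IGComponent C c₂ := by
  rintro ⟨c₁, hc₁, c₂, hc₂, hne, hnt₁, hnt₂, hU⟩
  -- clusters in different components are compatible
  have hcross : ∀ a ∈ IGComponent C c₁, ∀ b ∈ IGComponent C c₂, Compat a b := by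
    intro a ha b hb
    by_contra hnc
    have hrab : (fun a b : Set X => a ∈ C ∧ b ∈ C ∧ ¬ Compat a b) a b :=
      ⟨ha.1, hb.1, hnc⟩
    have h1 : IGComponent C c₁ = IGComponent C b :=
      comp_eq (Relation.ReflTransGen.trans ha.2 (Relation.ReflTransGen.single hrab))
    have h2 : IGComponent C c₂ = IGComponent C b := comp_eq hb.2
    exact hne (h1.trans h2.symm)
  have hcross' : ∀ b ∈ IGComponent C c₂, ∀ a ∈ IGComponent C c₁, Compat b a :=
    fun b hb a ha => compat_symm (hcross a ha b hb)
  -- no cluster of one component contains a cluster of the other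
  have key : ∀ (d₁ d₂ : Set X), ∀ a ∈ IGComponent C d₁, ∀ b ∈ IGComponent C d₂,
      (∀ b' ∈ IGComponent C d₂, Compat a b') →
      (IGComponent C d₁).Nontrivial →
      ⋃₀ IGComponent C d₁ = ⋃₀ IGComponent C d₂ → ¬ b ⊆ a := by
    intro d₁ d₂ a ha b hb hcomp hnt hUeq hsub
    -- all of component d₂ is inside a
    have hall : ∀ b' ∈ IGComponent C d₂, b' ⊆ a :=
      fun b' hb' => spread hcomp hb hb' hsub
    have hU₂ : ⋃₀ IGComponent C d₂ ⊆ a := by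
      intro x hx
      obtain ⟨b', hb', hxb'⟩ := hx
      exact hall b' hb' hxb'
    have haU : a ⊆ ⋃₀ IGComponent C d₁ := fun x hx => ⟨a, ha, hx⟩
    have haeq : a = ⋃₀ IGComponent C d₁ :=
      Set.Subset.antisymm haU (hUeq ▸ hU₂)
    obtain ⟨a', ha', hnc⟩ := neighbor hnt ha
    have : a' ⊆ a := by
      rw [haeq]; exact fun x hx => ⟨a', ha', hx⟩
    exact hnc (Or.inr (Or.inr this))
  -- hence all cross pairs are disjoint
  have hdisj : ∀ a ∈ IGComponent C c₁, ∀ b ∈ IGComponent C c₂, a ∩ b = ∅ := by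
    intro a ha b hb
    rcases hcross a ha b hb with h | h | h
    · exact h
    · exact absurd h (key c₂ c₁ b hb a ha (fun a' ha' => hcross' b hb a' ha') hnt₂ hU.symm)
    · exact absurd h (key c₁ c₂ a ha b hb (fun b' hb' => hcross a ha b' hb') hnt₁ hU)
  -- contradiction: unions are equal and nonempty
  have hc₁mem : c₁ ∈ IGComponent C c₁ := ⟨hc₁, Relation.ReflTransGen.refl⟩
  obtain ⟨x, hx⟩ := (hcl c₁ hc₁).1
  have hxU : x ∈ ⋃₀ IGComponent C c₂ := hU ▸ ⟨c₁, hc₁mem, hx⟩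
  obtain ⟨b, hb, hxb⟩ := hxU
  have := hdisj c₁ hc₁mem b hb
  exact absurd this (by
    intro h
    have : x ∈ c₁ ∩ b := ⟨hx, hxb⟩
    rw [h] at this
    exact this)
end

section
/- Let C be a set of clusters on X with |X| = n >= 2. Then the incompatibility graph IG(C) has at most 4(n-1) connected components. -/
namespace IGaux


variable {X : Type*}

lemma compat_symm {A B : Set X} (h : Compat A B) : Compat B A := by
  rcases h with h | h | h
  · exact Or.inl (by rw [Set.inter_comm]; exact h)
  · exact Or.inr (Or.inr h)
  · exact Or.inr (Or.inl h)

lemma not_compat {A B : Set X} (h : ¬ Compat A B) :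
    (A ∩ B).Nonempty ∧ ¬ A ⊆ B ∧ ¬ B ⊆ A := by
  unfold Compat at h; push_neg at h; exact h

variable {C : Set (Set X)}

lemma E_symm : Symmetric (fun a b => a ∈ C ∧ b ∈ C ∧ ¬ Compat a b) :=
  fun _ _ h => ⟨h.2.1, h.1, fun hc => h.2.2 (compat_symm hc)⟩

lemma rtg_symm {a b : Set X}
    (h : Relation.ReflTransGen (fun a b => a ∈ C ∧ b ∈ C ∧ ¬ Compat a b) a b) :
    Relation.ReflTransGen (fun a b => a ∈ C ∧ b ∈ C ∧ ¬ Compat a b) b a :=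
  (@Relation.ReflTransGen.symmetric _ _ ⟨fun _ _ h => E_symm h⟩).symm _ _ h

lemma mem_own {c : Set X} (hc : c ∈ C) : c ∈ IGComponent C c :=
  ⟨hc, Relation.ReflTransGen.refl⟩

lemma comp_subset {c : Set X} : IGComponent C c ⊆ C := fun _ h => h.1

lemma comp_eq {c d : Set X} (hd : d ∈ IGComponent C c) :
    IGComponent C c = IGComponent C d := by
  ext e
  constructor
  · exact fun he => ⟨he.1, (rtg_symm hd.2).trans he.2⟩
  · exact fun he => ⟨he.1, hd.2.trans he.2⟩

lemma step_mem {c d e : Set X} (hd : d ∈ IGComponent C c) (he : e ∈ C)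
    (hne : ¬ Compat d e) : e ∈ IGComponent C c :=
  ⟨he, hd.2.tail ⟨hd.1, he, hne⟩⟩

lemma cross_compat {c c' f g : Set X} (h : IGComponent C c ≠ IGComponent C c')
    (hf : f ∈ IGComponent C c) (hg : g ∈ IGComponent C c') : Compat f g := by
  by_contra hng
  have hgc : g ∈ IGComponent C c := step_mem hf hg.1 hng
  exact h ((comp_eq hgc).trans (comp_eq hg).symm)

/-- if one member of the component is `⊆ g` and `g` is compatible with all
members, all members are `⊆ g`. -/
lemma all_subset {c g f₀ : Set X} (hf₀ : f₀ ∈ IGComponent C c) (hf₀g : f₀ ⊆ g)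
    (hcomp : ∀ f ∈ IGComponent C c, Compat g f) :
    ∀ f ∈ IGComponent C c, f ⊆ g := by
  intro f hf
  have hconn : Relation.ReflTransGen (fun a b => a ∈ C ∧ b ∈ C ∧ ¬ Compat a b) f₀ f :=
    (rtg_symm hf₀.2).trans hf.2
  clear hf
  induction hconn with
  | refl => exact hf₀g
  | @tail b d hab he ih =>
      have hbK : b ∈ IGComponent C c := ⟨he.1, hf₀.2.trans hab⟩
      have hdK : d ∈ IGComponent C c := step_mem hbK he.2.1 he.2.2
      rcases hcomp d hdK with h | h | h
      · obtain ⟨x, hx⟩ := (not_compat he.2.2).1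
        exact absurd (Set.eq_empty_iff_forall_notMem.mp h x ⟨ih hx.1, hx.2⟩)
          (fun hh => hh)
      · exact absurd (Or.inr (Or.inl ((ih).trans h))) he.2.2
      · exact h

lemma lemA {c : Set X} {g : Set X}
    (hcomp : ∀ f ∈ IGComponent C c, Compat g f) :
    Compat g (⋃₀ IGComponent C c) := by
  by_cases hP : ∃ f ∈ IGComponent C c, f ⊆ g
  · obtain ⟨f₀, hf₀, hf₀g⟩ := hP
    exact Or.inr (Or.inr (Set.sUnion_subset (all_subset hf₀ hf₀g hcomp)))
  · push_neg at hP
    by_cases hQ : ∃ f ∈ IGComponent C c, g ⊆ f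
    · obtain ⟨f, hf, hgf⟩ := hQ
      exact Or.inr (Or.inl (hgf.trans (Set.subset_sUnion_of_mem hf)))
    · push_neg at hQ
      left
      ext x
      simp only [Set.mem_inter_iff, Set.mem_sUnion, Set.mem_empty_iff_false, iff_false,
        not_and]
      rintro hxg ⟨f, hf, hxf⟩
      rcases hcomp f hf with h | h | h
      · exact Set.eq_empty_iff_forall_notMem.mp h x ⟨hxg, hxf⟩
      · exact hQ f hf h
      · exact hP f hf h

lemma unions_compat {c c' : Set X}
    (hne : IGComponent C c ≠ IGComponent C c') :
    Compat (⋃₀ IGComponent C c) (⋃₀ IGComponent C c') := by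
  apply lemA
  intro f hf
  exact compat_symm (lemA (fun f' hf' => cross_compat hne.symm hf hf'))

lemma neighbor {c f d : Set X} (hf : f ∈ IGComponent C c)
    (hd : d ∈ IGComponent C c) (hfd : f ≠ d) :
    ∃ b ∈ IGComponent C c, ¬ Compat f b := by
  have hconn : Relation.ReflTransGen (fun a b => a ∈ C ∧ b ∈ C ∧ ¬ Compat a b) f d :=
    (rtg_symm hf.2).trans hd.2
  rcases hconn.cases_head with h | ⟨b, hb, _⟩
  · exact absurd h hfd
  · exact ⟨b, step_mem hf hb.2.1 hb.2.2, hb.2.2⟩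

/-- a vertex in a nontrivial component has a neighbor -/
lemma neighbor' {c g : Set X} (hg : g ∈ IGComponent C c)
    (hnt : ∃ a ∈ IGComponent C c, ∃ b ∈ IGComponent C c, a ≠ b) :
    ∃ b ∈ IGComponent C c, ¬ Compat g b := by
  obtain ⟨a, ha, b, hb, hab⟩ := hnt
  by_cases hga : g = a
  · exact neighbor hg hb (by rw [hga]; exact hab)
  · exact neighbor hg ha hga

lemma exists_supset {c c' : Set X} (hcl : ∀ a ∈ C, a.Nonempty)
    (hnt' : ∃ a ∈ IGComponent C c', ∃ b ∈ IGComponent C c', a ≠ b)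
    (hne : IGComponent C c ≠ IGComponent C c')
    (hU : ⋃₀ IGComponent C c = ⋃₀ IGComponent C c')
    {g : Set X} (hg : g ∈ IGComponent C c') :
    ∃ f ∈ IGComponent C c, g ⊆ f := by
  have hcomp : ∀ f ∈ IGComponent C c, Compat g f :=
    fun f hf => compat_symm (cross_compat hne hf hg)
  by_cases hP : ∃ f ∈ IGComponent C c, f ⊆ g
  · obtain ⟨f₀, hf₀, hf₀g⟩ := hP
    have hall := all_subset hf₀ hf₀g hcomp
    obtain ⟨b, hb, hgb⟩ := neighbor' hg hnt'
    exfalso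
    refine hgb (Or.inr (Or.inr ?_))
    calc b ⊆ ⋃₀ IGComponent C c' := Set.subset_sUnion_of_mem hb
      _ = ⋃₀ IGComponent C c := hU.symm
      _ ⊆ g := Set.sUnion_subset hall
  · push_neg at hP
    by_contra hQ
    push_neg at hQ
    -- every f in K is disjoint from g
    have hdisj : ∀ f ∈ IGComponent C c, g ∩ f = ∅ := by
      intro f hf
      rcases hcomp f hf with h | h | h
      · exact h
      · exact absurd h (hQ f hf)
      · exact absurd h (hP f hf)
    obtain ⟨x, hx⟩ := hcl g (comp_subset hg)
    have hxU : x ∈ ⋃₀ IGComponent C c := by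
      rw [hU]; exact Set.subset_sUnion_of_mem hg hx
    obtain ⟨f, hf, hxf⟩ := hxU
    exact Set.eq_empty_iff_forall_notMem.mp (hdisj f hf) x ⟨hx, hxf⟩

lemma nt_inj [Finite X] {c c' : Set X} (hcl : ∀ a ∈ C, a.Nonempty)
    (hnt : ∃ a ∈ IGComponent C c, ∃ b ∈ IGComponent C c, a ≠ b)
    (hnt' : ∃ a ∈ IGComponent C c', ∃ b ∈ IGComponent C c', a ≠ b)
    (hne : IGComponent C c ≠ IGComponent C c')
    (hU : ⋃₀ IGComponent C c = ⋃₀ IGComponent C c') : False := by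
  have h1 : ∀ g ∈ IGComponent C c', ∃ f ∈ IGComponent C c, g ⊆ f :=
    fun g hg => exists_supset hcl hnt' hne hU hg
  have h2 : ∀ f ∈ IGComponent C c, ∃ g ∈ IGComponent C c', f ⊆ g :=
    fun f hf => exists_supset hcl hnt hne.symm hU.symm hf
  -- pick a maximal element of K
  have hKfin : (IGComponent C c).Finite := Set.toFinite _
  obtain ⟨a, ha, -⟩ := id hnt
  obtain ⟨fs, hfs, hmax⟩ := Set.Finite.exists_maximalFor Set.ncard _ hKfin ⟨a, ha⟩
  obtain ⟨b, hb, hfb⟩ := neighbor' hfs hnt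
  obtain ⟨g, hg, hsg⟩ := h2 fs hfs
  have hgb : Compat g b := cross_compat hne.symm hg hb
  obtain ⟨⟨x, hx⟩, -, -⟩ := not_compat hfb
  rcases hgb with h | h | h
  · exact Set.eq_empty_iff_forall_notMem.mp h x ⟨hsg hx.1, hx.2⟩
  · exact hfb (Or.inr (Or.inl (hsg.trans h)))
  · obtain ⟨f', hf', hgf'⟩ := h1 g hg
    have hsub : fs ⊆ f' := hsg.trans hgf'
    have hcard : fs.ncard = f'.ncard :=
      le_antisymm (Set.ncard_le_ncard hsub (Set.toFinite _))
        (hmax hf' (Set.ncard_le_ncard hsub (Set.toFinite _)))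
    have : fs = f' := Set.eq_of_subset_of_ncard_le hsub hcard.ge (Set.toFinite _)
    exact hfb (Or.inr (Or.inr (h.trans (hgf'.trans this.symm.subset))))



variable {α : Type*} [DecidableEq α]

/-- A laminar family of finite sets each of size ≥ 2 inside `s` has at most
`|s| - 1` members. -/
lemma laminar_two : ∀ (n : ℕ) (s : Finset α), s.card ≤ n →
    ∀ L : Finset (Finset α),
    (∀ A ∈ L, ∀ B ∈ L, A ∩ B = ∅ ∨ A ⊆ B ∨ B ⊆ A) →
    (∀ A ∈ L, 2 ≤ A.card) → (∀ A ∈ L, A ⊆ s) → L.card ≤ s.card - 1 := by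
  intro n
  induction n with
  | zero =>
      intro s hs L hlam h2 hsub
      rcases L.eq_empty_or_nonempty with rfl | ⟨A, hA⟩
      · simp
      · have hse : s = ∅ := Finset.card_eq_zero.mp (Nat.le_zero.mp hs)
        have hA0 : A.card ≤ 0 := by
          have : A ⊆ (∅ : Finset α) := hse ▸ hsub A hA
          simpa using Finset.card_le_card this
        have := h2 A hA
        omega
  | succ n ih =>
      intro s hs L hlam h2 hsub
      rcases L.eq_empty_or_nonempty with rfl | hLne
      · simp
      obtain ⟨M, hM, hmin⟩ := Finset.exists_min_image L Finset.card hLne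
      have hM2 : 2 ≤ M.card := h2 M hM
      obtain ⟨x, hx⟩ := Finset.card_pos.mp (by omega : 0 < M.card)
      have hxs : x ∈ s := hsub M hM hx
      -- key: any other member containing x contains M
      have hkey : ∀ A ∈ L, A ≠ M → x ∈ A → M ⊆ A := by
        intro A hA hAM hxA
        rcases hlam A hA M hM with h | h | h
        · exact absurd h (Finset.ne_empty_of_mem (Finset.mem_inter.mpr ⟨hxA, hx⟩))
        · exact absurd (Finset.eq_of_subset_of_card_le h (hmin A hA)) hAM
        · exact h
      -- the mixed case is impossible
      have hmixed : ∀ A ∈ L.erase M, ∀ B ∈ L.erase M, x ∈ A → x ∉ B →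
          A.erase x = B.erase x → False := by
        intro A hA B hB hxA hxB hAB
        obtain ⟨hAM, hAL⟩ := Finset.mem_erase.mp hA
        obtain ⟨hBM, hBL⟩ := Finset.mem_erase.mp hB
        have hMA : M ⊆ A := hkey A hAL hAM hxA
        have hBeq : B = A.erase x := by
          rw [hAB, Finset.erase_eq_of_notMem hxB]
        have hMB : M.erase x ⊆ B := hBeq ▸ Finset.erase_subset_erase x hMA
        have : 0 < (M.erase x).card := by
          rw [Finset.card_erase_of_mem hx]; omega
        obtain ⟨y, hy⟩ := Finset.card_pos.mp this
        rcases hlam B hBL M hM with h | h | h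
        · exact Finset.ne_empty_of_mem
            (Finset.mem_inter.mpr ⟨hMB hy, Finset.mem_of_mem_erase hy⟩) h
        · exact hBM (Finset.eq_of_subset_of_card_le h (hmin B hBL))
        · exact hxB (h hx)
      have hinj : Set.InjOn (fun A : Finset α => A.erase x) (↑(L.erase M) : Set (Finset α)) := by
        intro A hA B hB hAB
        simp only at hAB
        by_cases hxA : x ∈ A <;> by_cases hxB : x ∈ B
        · rw [← Finset.insert_erase hxA, hAB, Finset.insert_erase hxB]
        · exact absurd hAB (fun h => hmixed A hA B hB hxA hxB h)
        · exact absurd hAB.symm (fun h => hmixed B hB A hA hxB hxA h)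
        · rw [← Finset.erase_eq_of_notMem hxA, hAB, Finset.erase_eq_of_notMem hxB]
      set L1 : Finset (Finset α) := (L.erase M).image (fun A => A.erase x) with hL1
      have hcard1 : L1.card = (L.erase M).card := Finset.card_image_of_injOn hinj
      have hmemL1 : ∀ A' ∈ L1, ∃ A ∈ L.erase M, A.erase x = A' := by
        intro A' hA'
        obtain ⟨A, hA, hAe⟩ := Finset.mem_image.mp hA'
        exact ⟨A, hA, hAe⟩
      have hlam1 : ∀ A' ∈ L1, ∀ B' ∈ L1, A' ∩ B' = ∅ ∨ A' ⊆ B' ∨ B' ⊆ A' := by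
        intro A' hA' B' hB'
        obtain ⟨A, hA, rfl⟩ := hmemL1 A' hA'
        obtain ⟨B, hB, rfl⟩ := hmemL1 B' hB'
        rcases hlam A (Finset.mem_of_mem_erase hA) B (Finset.mem_of_mem_erase hB)
          with h | h | h
        · exact Or.inl (Finset.subset_empty.mp (h ▸ Finset.inter_subset_inter
            (Finset.erase_subset x A) (Finset.erase_subset x B)))
        · exact Or.inr (Or.inl (Finset.erase_subset_erase x h))
        · exact Or.inr (Or.inr (Finset.erase_subset_erase x h))
      have h21 : ∀ A' ∈ L1, 2 ≤ A'.card := by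
        intro A' hA'
        obtain ⟨A, hA, rfl⟩ := hmemL1 A' hA'
        obtain ⟨hAM, hAL⟩ := Finset.mem_erase.mp hA
        by_cases hxA : x ∈ A
        · have hMA : M ⊂ A := (hkey A hAL hAM hxA).ssubset_of_ne (Ne.symm hAM)
          have := Finset.card_lt_card hMA
          rw [Finset.card_erase_of_mem hxA]
          omega
        · rw [Finset.erase_eq_of_notMem hxA]; exact h2 A hAL
      have hsub1 : ∀ A' ∈ L1, A' ⊆ s.erase x := by
        intro A' hA'
        obtain ⟨A, hA, rfl⟩ := hmemL1 A' hA'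
        exact Finset.erase_subset_erase x (hsub A (Finset.mem_of_mem_erase hA))
      have hscard : (s.erase x).card ≤ n := by
        rw [Finset.card_erase_of_mem hxs]; omega
      have hIH := ih (s.erase x) hscard L1 hlam1 h21 hsub1
      have hs2 : 2 ≤ s.card := hM2.trans (Finset.card_le_card (hsub M hM))
      have hLM : (L.erase M).card = L.card - 1 := Finset.card_erase_of_mem hM
      have hLpos : 0 < L.card := Finset.card_pos.mpr hLne
      rw [Finset.card_erase_of_mem hxs] at hIH
      omega

/-- A laminar family of nonempty finite sets inside `s` has at most
`|s| + (|s| - 1)` members. -/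
lemma laminar_card (s : Finset α) (L : Finset (Finset α))
    (hlam : ∀ A ∈ L, ∀ B ∈ L, A ∩ B = ∅ ∨ A ⊆ B ∨ B ⊆ A)
    (hne : ∀ A ∈ L, A.Nonempty) (hsub : ∀ A ∈ L, A ⊆ s) :
    L.card ≤ s.card + (s.card - 1) := by
  classical
  have hsplit : L = L.filter (fun A => A.card = 1) ∪ L.filter (fun A => 2 ≤ A.card) := by
    ext A
    simp only [Finset.mem_union, Finset.mem_filter]
    constructor
    · intro hA
      have := Finset.card_pos.mpr (hne A hA)
      rcases Nat.lt_or_ge A.card 2 with h | h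
      · exact Or.inl ⟨hA, by omega⟩
      · exact Or.inr ⟨hA, h⟩
    · rintro (⟨h, -⟩ | ⟨h, -⟩) <;> exact h
  have h1 : (L.filter (fun A => A.card = 1)).card ≤ s.card := by
    have : L.filter (fun A => A.card = 1) ⊆ s.image (fun a => {a}) := by
      intro A hA
      obtain ⟨hAL, hc⟩ := Finset.mem_filter.mp hA
      obtain ⟨a, rfl⟩ := Finset.card_eq_one.mp hc
      exact Finset.mem_image.mpr ⟨a, hsub _ hAL (Finset.mem_singleton_self a), rfl⟩
    exact (Finset.card_le_card this).trans Finset.card_image_le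
  have h2 : (L.filter (fun A => 2 ≤ A.card)).card ≤ s.card - 1 := by
    apply laminar_two s.card s le_rfl
    · intro A hA B hB
      exact hlam A (Finset.mem_filter.mp hA).1 B (Finset.mem_filter.mp hB).1
    · intro A hA
      exact (Finset.mem_filter.mp hA).2
    · intro A hA
      exact hsub A (Finset.mem_filter.mp hA).1
  have hu := Finset.card_union_le (L.filter (fun A => A.card = 1))
    (L.filter (fun A => 2 ≤ A.card))
  rw [← hsplit] at hu
  omega


section Bridge

variable {Y : Type*} [Fintype Y]

open Classical in
/-- laminar family of nonempty subsets of a finite type -/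
lemma set_laminar_card (L : Set (Set Y))
    (hlam : ∀ A ∈ L, ∀ B ∈ L, Compat A B)
    (hne : ∀ A ∈ L, A.Nonempty) :
    L.ncard ≤ Fintype.card Y + (Fintype.card Y - 1) := by
  classical
  have hLfin : L.Finite := Set.toFinite L
  set φ : Set Y → Finset Y := fun A => (Set.toFinite A).toFinset with hφ
  have hφinj : Function.Injective φ := by
    intro A B h
    have := congrArg (fun (t : Finset Y) => (t : Set Y)) h
    simpa [hφ, Set.Finite.coe_toFinset] using this
  set Lf : Finset (Finset Y) := hLfin.toFinset.image φ with hLf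
  have hmem : ∀ Af ∈ Lf, ∃ A ∈ L, φ A = Af := by
    intro Af hAf
    obtain ⟨A, hA, hAe⟩ := Finset.mem_image.mp hAf
    exact ⟨A, hLfin.mem_toFinset.mp hA, hAe⟩
  have hcard : Lf.card = L.ncard := by
    rw [hLf, Finset.card_image_of_injective _ hφinj, ← Set.ncard_eq_toFinset_card L hLfin]
  rw [← hcard]
  have := laminar_card (Finset.univ : Finset Y) Lf ?_ ?_ ?_
  · simpa using this
  · intro Af hAf Bf hBf
    obtain ⟨A, hA, rfl⟩ := hmem Af hAf
    obtain ⟨B, hB, rfl⟩ := hmem Bf hBf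
    rcases hlam A hA B hB with h | h | h
    · left
      apply Finset.eq_empty_iff_forall_notMem.mpr
      intro x hx
      rw [Finset.mem_inter] at hx
      have hxA := (Set.Finite.mem_toFinset _).mp hx.1
      have hxB := (Set.Finite.mem_toFinset _).mp hx.2
      exact Set.eq_empty_iff_forall_notMem.mp h x ⟨hxA, hxB⟩
    · right; left
      intro x hx
      exact (Set.Finite.mem_toFinset _).mpr (h ((Set.Finite.mem_toFinset _).mp hx))
    · right; right
      intro x hx
      exact (Set.Finite.mem_toFinset _).mpr (h ((Set.Finite.mem_toFinset _).mp hx))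
  · intro Af hAf
    obtain ⟨A, hA, rfl⟩ := hmem Af hAf
    obtain ⟨x, hx⟩ := hne A hA
    exact ⟨x, (Set.Finite.mem_toFinset _).mpr hx⟩
  · intro Af _
    exact Finset.subset_univ _

open Classical in
/-- laminar family of subsets each with ≥ 2 elements -/
lemma set_laminar_two (L : Set (Set Y))
    (hlam : ∀ A ∈ L, ∀ B ∈ L, Compat A B)
    (h2 : ∀ A ∈ L, ∃ x ∈ A, ∃ y ∈ A, x ≠ y) :
    L.ncard ≤ Fintype.card Y - 1 := by
  classical
  have hLfin : L.Finite := Set.toFinite L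
  set φ : Set Y → Finset Y := fun A => (Set.toFinite A).toFinset with hφ
  have hφinj : Function.Injective φ := by
    intro A B h
    have := congrArg (fun (t : Finset Y) => (t : Set Y)) h
    simpa [hφ, Set.Finite.coe_toFinset] using this
  set Lf : Finset (Finset Y) := hLfin.toFinset.image φ with hLf
  have hmem : ∀ Af ∈ Lf, ∃ A ∈ L, φ A = Af := by
    intro Af hAf
    obtain ⟨A, hA, hAe⟩ := Finset.mem_image.mp hAf
    exact ⟨A, hLfin.mem_toFinset.mp hA, hAe⟩
  have hcard : Lf.card = L.ncard := by
    rw [hLf, Finset.card_image_of_injective _ hφinj, ← Set.ncard_eq_toFinset_card L hLfin]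
  rw [← hcard]
  have := laminar_two (Fintype.card Y) (Finset.univ : Finset Y) (by simp) Lf ?_ ?_ ?_
  · simpa using this
  · intro Af hAf Bf hBf
    obtain ⟨A, hA, rfl⟩ := hmem Af hAf
    obtain ⟨B, hB, rfl⟩ := hmem Bf hBf
    rcases hlam A hA B hB with h | h | h
    · left
      apply Finset.eq_empty_iff_forall_notMem.mpr
      intro x hx
      rw [Finset.mem_inter] at hx
      have hxA := (Set.Finite.mem_toFinset _).mp hx.1
      have hxB := (Set.Finite.mem_toFinset _).mp hx.2
      exact Set.eq_empty_iff_forall_notMem.mp h x ⟨hxA, hxB⟩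
    · right; left
      intro x hx
      exact (Set.Finite.mem_toFinset _).mpr (h ((Set.Finite.mem_toFinset _).mp hx))
    · right; right
      intro x hx
      exact (Set.Finite.mem_toFinset _).mpr (h ((Set.Finite.mem_toFinset _).mp hx))
  · intro Af hAf
    obtain ⟨A, hA, rfl⟩ := hmem Af hAf
    obtain ⟨x, hx, y, hy, hxy⟩ := h2 A hA
    exact Finset.one_lt_card.mpr
      ⟨x, (Set.Finite.mem_toFinset _).mpr hx, y, (Set.Finite.mem_toFinset _).mpr hy, hxy⟩
  · intro Af _
    exact Finset.subset_univ _

end Bridge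

end IGaux

/-- For a set `C` of clusters on a taxon set `X` with `|X| = n ≥ 2`, the
incompatibility graph `IG(C)` has at most `4 * (n - 1)` connected
components. -/
theorem stmt14 {X : Type*} [Fintype X] (C : Set (Set X)) (n : ℕ)
    (hcl : ∀ c ∈ C, c.Nonempty ∧ c ≠ Set.univ)
    (hn : Fintype.card X = n) (hn2 : 2 ≤ n) :
    {K : Set (Set X) | ∃ c ∈ C, K = IGComponent C c}.ncard ≤ 4 * (n - 1) := by
  classical
  set S : Set (Set (Set X)) := {K : Set (Set X) | ∃ c ∈ C, K = IGComponent C c} with hS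
  set Tt : Set (Set (Set X)) := {K ∈ S | ∃ x, K = {x}} with hTt
  set Snt : Set (Set (Set X)) := {K ∈ S | ¬ ∃ x, K = {x}} with hSnt
  have hsplit : S = Tt ∪ Snt := by
    ext K
    simp only [hTt, hSnt, Set.mem_union, Set.mem_setOf_eq, Set.mem_sep_iff]
    tauto
  have hcne : ∀ a ∈ C, a.Nonempty := fun a ha => (hcl a ha).1
  -- non-trivial components have two distinct members
  have hntwo : ∀ K ∈ Snt, ∀ c ∈ C, K = IGComponent C c →
      ∃ a ∈ IGComponent C c, ∃ b ∈ IGComponent C c, a ≠ b := by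
    intro K hK c hc hKe
    by_contra h
    push_neg at h
    apply hK.2
    refine ⟨c, ?_⟩
    rw [hKe]
    apply Set.eq_singleton_iff_unique_mem.mpr
    exact ⟨IGaux.mem_own hc, fun d hd => by
      by_contra hdc
      exact hdc ((h d hd c (IGaux.mem_own hc)) )⟩
  -- unions are compatible across distinct components
  have hcompS : ∀ K ∈ S, ∀ K' ∈ S, K ≠ K' → Compat (⋃₀ K) (⋃₀ K') := by
    rintro K ⟨c, hc, rfl⟩ K' ⟨c', hc', rfl⟩ hne
    exact IGaux.unions_compat hne
  have hlamS : ∀ K ∈ S, ∀ K' ∈ S, Compat (⋃₀ K) (⋃₀ K') := by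
    intro K hK K' hK'
    by_cases h : K = K'
    · exact Or.inr (Or.inl (h ▸ subset_rfl))
    · exact hcompS K hK K' hK' h
  have hTcard : Tt.ncard ≤ n + (n - 1) := by
    have hinj : Set.InjOn (fun K : Set (Set X) => ⋃₀ K) Tt := by
      rintro K hK K' hK' h
      obtain ⟨-, x, rfl⟩ := hK
      obtain ⟨-, x', rfl⟩ := hK'
      have hx : x = x' := by simpa using h
      rw [hx]
    rw [← Set.ncard_image_of_injOn hinj]
    have := IGaux.set_laminar_card ((fun K : Set (Set X) => ⋃₀ K) '' Tt) ?_ ?_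
    · rwa [hn] at this
    · rintro A ⟨K, hK, rfl⟩ B ⟨K', hK', rfl⟩
      exact hlamS K hK.1 K' hK'.1
    · rintro A ⟨K, hK, rfl⟩
      obtain ⟨c, hc, hKe⟩ := hK.1
      obtain ⟨y, hy⟩ := hcne c hc
      exact ⟨y, Set.subset_sUnion_of_mem (hKe ▸ IGaux.mem_own hc) hy⟩
  have hNcard : Snt.ncard ≤ n - 1 := by
    have hinj : Set.InjOn (fun K : Set (Set X) => ⋃₀ K) Snt := by
      rintro K hK K' hK' h
      by_contra hne
      obtain ⟨c, hc, hKe⟩ := hK.1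
      obtain ⟨c', hc', hKe'⟩ := hK'.1
      subst hKe hKe'
      exact IGaux.nt_inj hcne (hntwo _ hK c hc rfl) (hntwo _ hK' c' hc' rfl) hne h
    rw [← Set.ncard_image_of_injOn hinj]
    have := IGaux.set_laminar_two ((fun K : Set (Set X) => ⋃₀ K) '' Snt) ?_ ?_
    · rwa [hn] at this
    · rintro A ⟨K, hK, rfl⟩ B ⟨K', hK', rfl⟩
      exact hlamS K hK.1 K' hK'.1
    · rintro A ⟨K, hK, rfl⟩
      obtain ⟨c, hc, hKe⟩ := hK.1
      obtain ⟨a, ha, b, hb, hab⟩ := hntwo K hK c hc hKe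
      obtain ⟨b', hb', hnc⟩ := IGaux.neighbor' ha ⟨a, ha, b, hb, hab⟩
      obtain ⟨-, hab', hba'⟩ := IGaux.not_compat hnc
      obtain ⟨x, hxa, hxb⟩ := Set.not_subset.mp hab'
      obtain ⟨y, hyb, hya⟩ := Set.not_subset.mp hba'
      subst hKe
      refine ⟨x, Set.subset_sUnion_of_mem ha hxa, y,
        Set.subset_sUnion_of_mem hb' hyb, ?_⟩
      rintro rfl
      exact hxb hyb
  have hle : S.ncard ≤ Tt.ncard + Snt.ncard := by
    rw [hsplit]; exact Set.ncard_union_le _ _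
  omega
end

section
/- An r-reticulation generator has at most 3r vertices and at most 4r-1 edges; consequently it has at most 7r-1 sides (edges plus indegree-2 outdegree-0 nodes). -/
def mindeg {V : Type*} [DecidableEq V] (E : Multiset (V × V)) (v : V) : ℕ :=
  (E.filter (fun e => e.2 = v)).card

def moutdeg {V : Type*} [DecidableEq V] (E : Multiset (V × V)) (v : V) : ℕ :=
  (E.filter (fun e => e.1 = v)).card

def MAcyclic {V : Type*} (E : Multiset (V × V)) : Prop :=
  ∀ v : V, ¬ Relation.TransGen (fun a b => (a, b) ∈ E) v v


lemma sum_deg_aux {V : Type*} [Fintype V] [DecidableEq V] (E : Multiset (V × V))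
    (f : V × V → V) : ∑ v, (E.filter (fun e => f e = v)).card = Multiset.card E := by
  induction E using Multiset.induction_on with
  | empty => simp
  | cons a s ih =>
    simp only [Multiset.filter_cons, Multiset.card_add, Multiset.card_cons]
    rw [Finset.sum_add_distrib, ih]
    simp only [apply_ite Multiset.card, Multiset.card_singleton, Multiset.card_zero,
      Finset.sum_ite_eq, Finset.mem_univ, if_true]
    omega

lemma sum_mindeg {V : Type*} [Fintype V] [DecidableEq V] (E : Multiset (V × V)) :
    ∑ v, mindeg E v = Multiset.card E := sum_deg_aux E (fun e => e.2)

lemma sum_moutdeg {V : Type*} [Fintype V] [DecidableEq V] (E : Multiset (V × V)) :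
    ∑ v, moutdeg E v = Multiset.card E := sum_deg_aux E (fun e => e.1)

/-- An `r`-reticulation generator — a directed acyclic multigraph with a
single fake root of indegree 0 and outdegree 1, exactly `r` reticulation
nodes (indegree 2, outdegree at most 1), and all other nodes of indegree 1 and
outdegree 2 — has at most `3r` vertices and at most `4r - 1` edges, and hence
at most `7r - 1` sides (edges together with indegree-2 outdegree-0 nodes). -/
theorem stmt17 {V : Type*} [Fintype V] [DecidableEq V]
    (E : Multiset (V × V)) (r : ℕ) (hr : 1 ≤ r)
    (hacyc : MAcyclic E)
    (hroot : ∃! ρ : V, mindeg E ρ = 0)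
    (hrootdeg : ∀ ρ : V, mindeg E ρ = 0 → moutdeg E ρ = 1)
    (hdeg : ∀ v : V, mindeg E v ≤ 2)
    (hretic : ∀ v : V, mindeg E v = 2 → moutdeg E v ≤ 1)
    (hr' : (Finset.univ.filter (fun v : V => mindeg E v = 2)).card = r)
    (htree : ∀ v : V, mindeg E v = 1 → moutdeg E v = 2) :
    Fintype.card V ≤ 3 * r ∧ Multiset.card E ≤ 4 * r - 1 ∧
    Multiset.card E +
      (Finset.univ.filter
        (fun v : V => mindeg E v = 2 ∧ moutdeg E v = 0)).card ≤ 7 * r - 1 := by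
  classical
  obtain ⟨ρ, hρ0, hρu⟩ := hroot
  have hS0eq : Finset.univ.filter (fun v : V => mindeg E v = 0) = {ρ} := by
    ext v
    simp only [Finset.mem_filter, Finset.mem_univ, true_and, Finset.mem_singleton]
    exact ⟨fun h => hρu v h, fun h => h ▸ hρ0⟩
  have hd01 : Disjoint (Finset.univ.filter (fun v : V => mindeg E v = 0))
      (Finset.univ.filter (fun v : V => mindeg E v = 1)) := by
    rw [Finset.disjoint_left]
    intro a ha hb
    simp only [Finset.mem_filter] at ha hb
    omega
  have hd012 : Disjoint (Finset.univ.filter (fun v : V => mindeg E v = 0) ∪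
      Finset.univ.filter (fun v : V => mindeg E v = 1))
      (Finset.univ.filter (fun v : V => mindeg E v = 2)) := by
    rw [Finset.disjoint_left]
    intro a ha hb
    simp only [Finset.mem_union, Finset.mem_filter] at ha hb
    omega
  have huniv : (Finset.univ.filter (fun v : V => mindeg E v = 0) ∪
      Finset.univ.filter (fun v : V => mindeg E v = 1)) ∪
      Finset.univ.filter (fun v : V => mindeg E v = 2) = Finset.univ := by
    ext v
    simp only [Finset.mem_union, Finset.mem_filter, Finset.mem_univ, true_and, iff_true]
    have := hdeg v
    omega
  have hin : Multiset.card E =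
      (Finset.univ.filter (fun v : V => mindeg E v = 1)).card + 2 * r := by
    rw [← sum_mindeg E]
    conv_lhs => rw [← huniv]
    rw [Finset.sum_union hd012, Finset.sum_union hd01]
    have h0 : ∑ v ∈ Finset.univ.filter (fun v : V => mindeg E v = 0), mindeg E v = 0 :=
      Finset.sum_eq_zero fun v hv => (Finset.mem_filter.mp hv).2
    have h1 : ∑ v ∈ Finset.univ.filter (fun v : V => mindeg E v = 1), mindeg E v =
        (Finset.univ.filter (fun v : V => mindeg E v = 1)).card := by
      rw [Finset.card_eq_sum_ones]
      exact Finset.sum_congr rfl fun v hv => (Finset.mem_filter.mp hv).2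
    have h2 : ∑ v ∈ Finset.univ.filter (fun v : V => mindeg E v = 2), mindeg E v = 2 * r := by
      calc ∑ v ∈ Finset.univ.filter (fun v : V => mindeg E v = 2), mindeg E v
          = ∑ _v ∈ Finset.univ.filter (fun v : V => mindeg E v = 2), 2 :=
            Finset.sum_congr rfl fun v hv => (Finset.mem_filter.mp hv).2
        _ = 2 * r := by rw [Finset.sum_const, ← hr']; ring
    rw [h0, h1, h2]
    omega
  have hout : 1 + 2 * (Finset.univ.filter (fun v : V => mindeg E v = 1)).card ≤
      Multiset.card E := by
    rw [← sum_moutdeg E]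
    have hle : ∑ v ∈ (Finset.univ.filter (fun v : V => mindeg E v = 0) ∪
        Finset.univ.filter (fun v : V => mindeg E v = 1)), moutdeg E v ≤
        ∑ v, moutdeg E v := Finset.sum_le_sum_of_subset (Finset.subset_univ _)
    have heq : ∑ v ∈ (Finset.univ.filter (fun v : V => mindeg E v = 0) ∪
        Finset.univ.filter (fun v : V => mindeg E v = 1)), moutdeg E v =
        1 + 2 * (Finset.univ.filter (fun v : V => mindeg E v = 1)).card := by
      rw [Finset.sum_union hd01]
      have h0 : ∑ v ∈ Finset.univ.filter (fun v : V => mindeg E v = 0), moutdeg E v = 1 := by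
        rw [hS0eq, Finset.sum_singleton]
        exact hrootdeg ρ hρ0
      have h1 : ∑ v ∈ Finset.univ.filter (fun v : V => mindeg E v = 1), moutdeg E v =
          2 * (Finset.univ.filter (fun v : V => mindeg E v = 1)).card := by
        calc ∑ v ∈ Finset.univ.filter (fun v : V => mindeg E v = 1), moutdeg E v
            = ∑ v ∈ Finset.univ.filter (fun v : V => mindeg E v = 1), 2 :=
              Finset.sum_congr rfl fun v hv => htree v (Finset.mem_filter.mp hv).2
          _ = _ := by rw [Finset.sum_const]; ring
      rw [h0, h1]
    omega
  have hV : Fintype.card V =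
      1 + (Finset.univ.filter (fun v : V => mindeg E v = 1)).card + r := by
    rw [← Finset.card_univ]
    conv_lhs => rw [← huniv]
    rw [Finset.card_union_of_disjoint hd012, Finset.card_union_of_disjoint hd01, hS0eq, hr']
    simp
  have hk : (Finset.univ.filter
      (fun v : V => mindeg E v = 2 ∧ moutdeg E v = 0)).card ≤ r := by
    rw [← hr']
    apply Finset.card_le_card
    intro v hv
    simp only [Finset.mem_filter] at hv ⊢
    exact ⟨hv.1, hv.2.1⟩
  refine ⟨by omega, by omega, by omega⟩
end
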